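/- arXiv:2101.00103 — 2 statements merged into one kernel-verified Lean document; each statement's English description precedes it below -/
import Mathlib

section
/- For k ≥ 1 and α ≥ 1: U^k(ℤ_{2^α}) is a boolean ring (i.e., an elementary abelian 2-group) if and only if α = 2k or α = 2k+1, and U^k(ℤ_{2^α}) is trivial if and only if α < 2k. -/
/-- Cyclic factors of the group of units of `ZMod (p^a)` (Lemma int1). -/
noncomputable def pUnitsList (p a : ℕ) : List ℕ :=
  if p = 2 then (if 2 ≤ a then [2, 2 ^ (a - 2)] else [1]) else [p - 1, p ^ (a - 1)]

/-- Cyclic factors of `U(ZMod n)`, via the prime-power factorization of `n`. -/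
noncomputable def unitsList (n : ℕ) : List ℕ :=
  (Nat.factorization n).support.toList.flatMap fun p => pUnitsList p (Nat.factorization n p)

/-- One application of the units functor to a product of cyclic rings. -/
noncomputable def uStep (l : List ℕ) : List ℕ := l.flatMap unitsList

/-- Cyclic factors of the k-th iterated group of units `U^k(ZMod n)`. -/
noncomputable def UkList (k n : ℕ) : List ℕ := uStep^[k] [n]

/-- The k-th iterated group of units `U^k(ZMod n)`, as the product of its cyclic factors. -/
abbrev Uk (k n : ℕ) : Type := ∀ i : Fin (UkList k n).length, ZMod ((UkList k n).get i)

lemma unitsList_two_pow (b : ℕ) (hb : 1 ≤ b) : unitsList (2^b) = pUnitsList 2 b := by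
  have h2 : Nat.Prime 2 := Nat.prime_two
  have hf : Nat.factorization (2^b) = Finsupp.single 2 b := h2.factorization_pow
  simp [unitsList, hf, Finsupp.support_single_ne_zero _ (by omega : b ≠ 0)]

lemma unitsList_one : unitsList 1 = [] := by simp [unitsList]

lemma unitsList_two : unitsList 2 = [1] := by
  have := unitsList_two_pow 1 le_rfl
  simpa [pUnitsList] using this

lemma unitsList_two_pow' (b : ℕ) (hb : 2 ≤ b) : unitsList (2^b) = [2, 2^(b-2)] := by
  rw [unitsList_two_pow b (by omega), pUnitsList]
  simp [hb]

lemma uStep_cons (a : ℕ) (l : List ℕ) : uStep (a :: l) = unitsList a ++ uStep l := by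
  simp [uStep]

lemma uStep_nil : uStep [] = [] := by simp [uStep]

-- key iteration lemma
lemma uStep_123 (c : ℕ) (hc : 2 ≤ c) : uStep [1, 2, 2^c] = [1, 2, 2^(c-2)] := by
  simp [uStep_cons, uStep_nil, unitsList_one, unitsList_two, unitsList_two_pow' c hc]

lemma iter_lemma (j b : ℕ) (hj : 1 ≤ j) (hb : 2*j ≤ b) :
    uStep^[j] [2, 2^b] = [1, 2, 2^(b - 2*j)] := by
  induction j with
  | zero => omega
  | succ n ih =>
    rcases Nat.eq_or_lt_of_le hj with h1 | h1
    · have : n = 0 := by omega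
      subst this
      show uStep [2, 2^b] = [1, 2, 2^(b - 2*1)]
      rw [uStep_cons, uStep_cons, uStep_nil, unitsList_two, unitsList_two_pow' b (by omega)]
      have : b - 2*1 = b - 2 := by omega
      rw [this]
      rfl
    · have hn : 1 ≤ n := by omega
      rw [Function.iterate_succ_apply', ih hn (by omega)]
      rw [uStep_123 (b - 2*n) (by omega)]
      have : b - 2*n - 2 = b - 2*(n+1) := by omega
      rw [this]

lemma uStep_allone (l : List ℕ) (h : ∀ x ∈ l, x = 1) : uStep l = [] := by
  induction l with
  | nil => exact uStep_nil
  | cons a t ih =>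
    rw [uStep_cons, h a (by simp), unitsList_one, List.nil_append]
    exact ih fun x hx => h x (by simp [hx])

lemma iter_allone (j : ℕ) (l : List ℕ) (h : ∀ x ∈ l, x = 1) :
    ∀ x ∈ uStep^[j] l, x = 1 := by
  induction j generalizing l with
  | zero => simpa using h
  | succ n ih =>
    rw [Function.iterate_succ_apply, uStep_allone l h]
    exact ih [] (by simp)

lemma small_iter (j b : ℕ) (hj : 1 ≤ j) (hb : b < 2*j) :
    ∀ x ∈ uStep^[j] [2, 2^b] , x = 1 := by
  induction j with
  | zero => omega
  | succ n ih =>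
    rcases Nat.lt_or_ge b (2*n) with h1 | h1
    · have hn : 1 ≤ n := by omega
      rw [Function.iterate_succ_apply']
      intro x hx
      -- all entries of uStep^[n] are 1, so uStep of it is []
      rw [uStep_allone _ (ih hn h1)] at hx
      simp at hx
    · rcases Nat.eq_or_lt_of_le (show 1 ≤ n + 1 from by omega) with hn0 | hn0
      · -- n = 0, so b < 2, j = 1
        have : n = 0 := by omega
        subst this
        interval_cases b
        · show ∀ x ∈ uStep [2, 2^0], x = 1
          rw [show (2:ℕ)^0 = 1 from rfl, uStep_cons, uStep_cons, uStep_nil,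
            unitsList_two, unitsList_one]
          simp
        · show ∀ x ∈ uStep [2, 2^1], x = 1
          rw [show (2:ℕ)^1 = 2 from rfl, uStep_cons, uStep_cons, uStep_nil,
            unitsList_two]
          simp
      · -- n ≥ 1 and 2n ≤ b < 2n+2
        have hn : 1 ≤ n := by omega
        rw [Function.iterate_succ_apply', iter_lemma n b hn h1]
        have hb2 : b - 2*n = 0 ∨ b - 2*n = 1 := by omega
        rcases hb2 with h | h <;> rw [h] <;>
          · rw [uStep_cons, uStep_cons, uStep_cons, uStep_nil, unitsList_one, unitsList_two]
            first
            | (rw [show (2:ℕ)^0 = 1 from rfl, unitsList_one]; simp)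
            | (rw [show (2:ℕ)^1 = 2 from rfl, unitsList_two]; simp)


lemma UkList_eq (k α : ℕ) (hk : 1 ≤ k) (hα : 2 ≤ α) :
    UkList k (2^α) = uStep^[k-1] [2, 2^(α-2)] := by
  have : k = (k-1) + 1 := by omega
  rw [UkList, this, Function.iterate_succ_apply]
  congr 1
  rw [show uStep [2^α] = unitsList (2^α) from by simp [uStep],
    unitsList_two_pow' α hα]

-- type-level lemmas
lemma zmod_one_ne_zero (n : ℕ) (hn : n ≠ 1) : (1 : ZMod n) ≠ 0 := by
  match n, hn with
  | 0, _ => exact one_ne_zero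
  | (m+2), _ =>
    haveI : Fact (1 < m + 2) := ⟨by omega⟩
    exact one_ne_zero

lemma subsingleton_of_allone (l : List ℕ) (h : ∀ x ∈ l, x = 1) :
    Subsingleton (∀ i : Fin l.length, ZMod (l.get i)) := by
  constructor
  intro a b
  funext i
  have h1 : l.get i = 1 := h _ (l.get_mem i)
  haveI : Subsingleton (ZMod (l.get i)) := by rw [h1]; infer_instance
  exact Subsingleton.elim _ _

lemma nontrivial_of_mem (l : List ℕ) (n : ℕ) (hn : n ∈ l) (h1 : n ≠ 1) :
    Nontrivial (∀ i : Fin l.length, ZMod (l.get i)) := by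
  obtain ⟨i, hi⟩ := List.mem_iff_get.1 hn
  refine ⟨0, Pi.single i 1, fun h => ?_⟩
  have := congrFun h i
  rw [Pi.single_eq_same] at this
  exact zmod_one_ne_zero (l.get i) (by rw [hi]; exact h1) this.symm

lemma addorder_iff (l : List ℕ) :
    (∀ x : (∀ i : Fin l.length, ZMod (l.get i)), x + x = 0) ↔
      ∀ i : Fin l.length, ∀ y : ZMod (l.get i), y + y = 0 := by
  constructor
  · intro h i y
    have := congrFun (h (Pi.single i y)) i
    simpa [Pi.single_eq_same] using this
  · intro h x
    funext i
    exact h i (x i)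

lemma zmod_addorder_of_dvd (n : ℕ) (h : n ∣ 2) : ∀ y : ZMod n, y + y = 0 := by
  have h2 : n ≤ 2 := Nat.le_of_dvd (by norm_num) h
  interval_cases n
  · exact absurd h (by norm_num)
  · intro y; exact Subsingleton.elim _ _
  · decide

lemma zmod_dvd_of_addorder (n : ℕ) (hn : n ≠ 0) (h : ∀ y : ZMod n, y + y = 0) : n ∣ 2 := by
  haveI : NeZero n := ⟨hn⟩
  have := h 1
  have h2 : ((2 : ℕ) : ZMod n) = 0 := by push_cast; linear_combination this
  exact (ZMod.natCast_eq_zero_iff 2 n).1 h2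

theorem stmt_13 (k α : ℕ) (hk : 1 ≤ k) (hα : 1 ≤ α) :
    ((Nontrivial (Uk k (2 ^ α)) ∧ ∀ x : Uk k (2 ^ α), x + x = 0) ↔
      (α = 2 * k ∨ α = 2 * k + 1)) ∧
    (Subsingleton (Uk k (2 ^ α)) ↔ α < 2 * k) := by
  rcases Nat.lt_or_ge α (2*k) with hlt | hge
  · -- trivial case: α < 2k
    have hall : ∀ x ∈ UkList k (2^α), x = 1 := by
      rcases Nat.lt_or_ge α 2 with h2 | h2
      · have hα1 : α = 1 := by omega
        subst hα1
        have hstep : uStep [2^1] = [1] := by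
          rw [show (2:ℕ)^1 = 2 from rfl]
          simp [uStep, unitsList_two]
        have : UkList k (2^1) = uStep^[k-1] [1] := by
          rw [UkList]
          conv_lhs => rw [show k = (k-1)+1 from by omega]
          rw [Function.iterate_succ_apply, hstep]
        rw [this]
        exact iter_allone (k-1) [1] (by simp)
      · have hk2 : 2 ≤ k := by omega
        rw [UkList_eq k α hk h2]
        exact small_iter (k-1) (α-2) (by omega) (by omega)
    haveI hsub : Subsingleton (Uk k (2^α)) := subsingleton_of_allone _ hall
    constructor
    · constructor
      · rintro ⟨hnt, -⟩
        exact absurd hnt (not_nontrivial _)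
      · intro h; omega
    · constructor
      · intro _; exact hlt
      · intro _; exact hsub
  · -- α ≥ 2k
    have hmem : 2 ∈ UkList k (2^α) ∧ 2^(α-2*k) ∈ UkList k (2^α) ∧
        ∀ x ∈ UkList k (2^α), x ∣ 2 ∨ x = 2^(α-2*k) := by
      rcases Nat.eq_or_lt_of_le hk with h1 | h1
      · subst h1
        rw [UkList_eq 1 α le_rfl (by omega)]
        simp only [Nat.sub_self, Function.iterate_zero, id]
        refine ⟨by simp, by simp [show α - 2*1 = α - 2 from by omega], ?_⟩
        intro x hx
        simp at hx
        rcases hx with h | h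
        · left; simp [h]
        · right; rw [h, show α - 2 = α - 2*1 from by omega]
      · have hk2 : 2 ≤ k := by omega
        rw [UkList_eq k α hk (by omega), iter_lemma (k-1) (α-2) (by omega) (by omega)]
        have he : α - 2 - 2*(k-1) = α - 2*k := by omega
        rw [he]
        refine ⟨by simp, by simp, ?_⟩
        intro x hx
        simp at hx
        rcases hx with h | h | h
        · left; simp [h]
        · left; simp [h]
        · right; exact h
    obtain ⟨h2mem, hcmem, hdvd⟩ := hmem
    haveI hnt : Nontrivial (Uk k (2^α)) := nontrivial_of_mem _ 2 h2mem (by norm_num)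
    constructor
    · constructor
      · rintro ⟨-, hbool⟩
        have := (addorder_iff _).1 hbool
        obtain ⟨i, hi⟩ := List.mem_iff_get.1 hcmem
        have hd : (UkList k (2^α)).get i ∣ 2 :=
          zmod_dvd_of_addorder _ (by rw [hi]; positivity) (this i)
        rw [hi] at hd
        have : α - 2*k ≤ 1 := by
          by_contra hc
          push_neg at hc
          have : (2:ℕ)^2 ∣ 2^(α-2*k) := pow_dvd_pow 2 (by omega)
          have := this.trans hd
          norm_num at this
        omega
      · intro h
        refine ⟨hnt, (addorder_iff _).2 fun i y => ?_⟩
        refine zmod_addorder_of_dvd _ ?_ y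
        rcases hdvd _ ((UkList k (2^α)).get_mem i) with hd | hd
        · exact hd
        · rw [hd]
          have : α - 2*k ≤ 1 := by omega
          interval_cases h : (α - 2*k)
          · norm_num
          · norm_num
    · constructor
      · intro hsub
        exact absurd hnt (not_nontrivial _)
      · intro h; omega
end

section
/- Let p be an odd prime with p ≠ 3. Then U^k(ℤ_{p^α}) is a boolean ring if and only if α < k and U^{k-α+1}(ℤ_p) is a boolean ring; moreover in that case U^k(ℤ_{p^α}) ≅ U^{k-α+1}(ℤ_p). -/
lemma unitsList_pp {p : ℕ} (hp : p.Prime) (hp2 : p ≠ 2) {β : ℕ} (hβ : 1 ≤ β) :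
    unitsList (p ^ β) = [p - 1, p ^ (β - 1)] := by
  unfold unitsList
  rw [Nat.Prime.factorization_pow hp]
  rw [Finsupp.support_single_ne_zero _ (by omega)]
  simp [pUnitsList, hp2]

lemma uStep_append (l1 l2 : List ℕ) : uStep (l1 ++ l2) = uStep l1 ++ uStep l2 := by
  simp [uStep]

lemma uStep_singleton (a : ℕ) : uStep [a] = unitsList a := by simp [uStep]

lemma uStep_iter_append (m : ℕ) (l1 l2 : List ℕ) :
    uStep^[m] (l1 ++ l2) = uStep^[m] l1 ++ uStep^[m] l2 := by
  induction m generalizing l1 l2 with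
  | zero => rfl
  | succ m ih => simp [Function.iterate_succ_apply, uStep_append, ih]

lemma uStep_iter_nil (m : ℕ) : uStep^[m] [] = [] := Function.iterate_fixed uStep_nil m

noncomputable def Fl (p m : ℕ) : List ℕ := uStep^[m] [p-1]
noncomputable def Gl (p m β : ℕ) : List ℕ := uStep^[m] [p^β]
noncomputable def Hl (p m β : ℕ) : List ℕ := Fl p m ++ Gl p m β
def Bl (l : List ℕ) : Prop := (∀ n ∈ l, n ∣ 2) ∧ 2 ∈ l

section PrimeLemmas

variable {p : ℕ} (hp : p.Prime) (hp2 : p ≠ 2)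

include hp hp2 in
lemma Gl_succ {m β : ℕ} (hβ : 1 ≤ β) :
    Gl p (m+1) β = Fl p m ++ Gl p m (β-1) := by
  unfold Gl Fl
  rw [Function.iterate_succ_apply, uStep_singleton, unitsList_pp hp hp2 hβ,
    show [p-1, p^(β-1)] = [p-1] ++ [p^(β-1)] from rfl, uStep_iter_append]

lemma Gl_zero {m : ℕ} (hm : 1 ≤ m) : Gl p m 0 = [] := by
  unfold Gl
  obtain ⟨m, rfl⟩ := Nat.exists_eq_add_of_le hm
  rw [add_comm, Function.iterate_succ_apply, pow_zero, uStep_singleton, unitsList_one,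
    uStep_iter_nil]

include hp hp2 in
lemma Hl_succ {m β : ℕ} (hβ : 1 ≤ β) :
    Hl p (m+1) β = Fl p (m+1) ++ Hl p m (β-1) := by
  unfold Hl
  rw [Gl_succ hp hp2 hβ]

lemma Fl_succ (m : ℕ) : Fl p (m+1) = uStep (Fl p m) := by
  unfold Fl; rw [Function.iterate_succ_apply']

include hp hp2 in
lemma UkList_pp {k α : ℕ} (hk : 1 ≤ k) (hα : 1 ≤ α) :
    UkList k (p ^ α) = Hl p (k-1) (α-1) := by
  obtain ⟨k, rfl⟩ := Nat.exists_eq_add_of_le hk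
  unfold UkList Hl Fl Gl
  rw [add_comm, Function.iterate_succ_apply, uStep_singleton, unitsList_pp hp hp2 hα,
    show [p-1, p^(α-1)] = [p-1] ++ [p^(α-1)] from rfl, uStep_iter_append]
  simp

include hp hp2 in
lemma UkList_p {j : ℕ} : UkList (j+1) p = Hl p j 0 := by
  unfold UkList Hl Fl Gl
  have h1 : unitsList p = [p-1] ++ [p^0] := by
    have := unitsList_pp hp hp2 (β := 1) le_rfl
    rw [pow_one] at this
    simpa using this
  rw [Function.iterate_succ_apply, uStep_singleton, h1, uStep_iter_append]

lemma allDvd_uStep {l : List ℕ} (h : ∀ n ∈ l, n ∣ 2) : ∀ n ∈ uStep l, n = 1 := by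
  intro n hn
  rw [uStep, List.mem_flatMap] at hn
  obtain ⟨a, ha, hna⟩ := hn
  rcases (Nat.dvd_prime Nat.prime_two).mp (h a ha) with rfl | rfl
  · rw [unitsList_one] at hna; exact absurd hna List.not_mem_nil
  · rw [unitsList_two] at hna; simpa using hna

lemma allOnes_uStep {l : List ℕ} (h : ∀ n ∈ l, n = 1) : uStep l = [] := by
  rw [uStep, List.flatMap_eq_nil_iff]
  intro a ha; rw [h a ha]; exact unitsList_one

lemma Bl_pre {l r : List ℕ} :
    (Bl (uStep l ++ (l ++ r)) ↔ Bl (l ++ r)) ∧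
    (Bl (l ++ r) → (uStep l ++ (l ++ r)).filter (fun n => n ≠ 1) =
      (l ++ r).filter (fun n => n ≠ 1)) := by
  constructor
  · constructor
    · rintro ⟨hall, h2⟩
      have hl : ∀ n ∈ l, n ∣ 2 := fun n hn =>
        hall n (by simp [List.mem_append, hn])
      have hones := allDvd_uStep hl
      refine ⟨fun n hn => hall n (by simp [List.mem_append, hn]), ?_⟩
      rcases List.mem_append.mp h2 with h | h
      · exact absurd (hones 2 h) (by norm_num)
      · exact h
    · rintro ⟨hall, h2⟩
      have hl : ∀ n ∈ l, n ∣ 2 := fun n hn => hall n (List.mem_append_left r hn)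
      have hones := allDvd_uStep hl
      refine ⟨?_, List.mem_append_right _ h2⟩
      intro n hn
      rcases List.mem_append.mp hn with h | h
      · rw [hones n h]; exact one_dvd 2
      · exact hall n h
  · rintro ⟨hall, h2⟩
    have hl : ∀ n ∈ l, n ∣ 2 := fun n hn => hall n (List.mem_append_left r hn)
    have hones := allDvd_uStep hl
    rw [List.filter_append]
    have : (uStep l).filter (fun n => n ≠ 1) = [] := by
      rw [List.filter_eq_nil_iff]
      intro a ha
      simp [hones a ha]
    rw [this, List.nil_append]

include hp hp2 in
lemma Bl_key : ∀ β m : ℕ, β < m →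
    (Bl (Hl p m β) ↔ Bl (Hl p (m - β) 0)) ∧
    (Bl (Hl p m β) → (Hl p m β).filter (fun n => n ≠ 1) =
      (Hl p (m - β) 0).filter (fun n => n ≠ 1)) := by
  intro β
  induction β with
  | zero => intro m _; simp
  | succ β ih =>
    intro m hm
    obtain ⟨m, rfl⟩ : ∃ m', m = m' + 1 := ⟨m - 1, by omega⟩
    have hH : Hl p (m+1) (β+1) = uStep (Fl p m) ++ (Fl p m ++ Gl p m β) := by
      rw [Hl_succ hp hp2 (by omega), Fl_succ]
      rfl
    have hsub : m + 1 - (β + 1) = m - β := by omega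
    obtain ⟨ih1, ih2⟩ := ih m (by omega)
    obtain ⟨pre1, pre2⟩ := Bl_pre (l := Fl p m) (r := Gl p m β)
    rw [hsub, hH]
    constructor
    · exact pre1.trans ih1
    · intro hb
      have hb' : Bl (Fl p m ++ Gl p m β) := pre1.mp hb
      rw [pre2 hb']
      exact ih2 hb'

include hp hp2 in
lemma mem_Hl_of_le : ∀ m β : ℕ, m ≤ β → p - 1 ∈ Hl p m β := by
  intro m
  induction m with
  | zero =>
    intro β _
    unfold Hl Fl Gl
    simp
  | succ m ih =>
    intro β hβ
    rw [show Hl p (m+1) β = Fl p (m+1) ++ Hl p m (β-1) from Hl_succ hp hp2 (by omega)]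
    exact List.mem_append_right _ (ih (β-1) (by omega))

end PrimeLemmas

lemma zmod_add_self_iff (n : ℕ) : (∀ g : ZMod n, g + g = 0) ↔ n ∣ 2 := by
  constructor
  · intro h
    match n with
    | 0 => have := h 1; norm_num at this
    | (m+1) =>
      have h1 := h 1
      have : ((2 : ℕ) : ZMod (m+1)) = 0 := by push_cast; linear_combination h1
      exact (ZMod.natCast_eq_zero_iff 2 (m+1)).mp this
  · intro h g
    rcases (Nat.dvd_prime Nat.prime_two).mp h with rfl | rfl
    · exact Subsingleton.elim _ _
    · revert g; decide

lemma bridge (l : List ℕ) :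
    (Nontrivial (∀ i : Fin l.length, ZMod (l.get i)) ∧
      ∀ x : (∀ i : Fin l.length, ZMod (l.get i)), x + x = 0) ↔ Bl l := by
  constructor
  · rintro ⟨hnt, hx⟩
    have hall : ∀ n ∈ l, n ∣ 2 := by
      intro n hn
      obtain ⟨i, rfl⟩ := List.mem_iff_get.mp hn
      rw [← zmod_add_self_iff]
      intro g
      have := congrFun (hx (Pi.single i g)) i
      simpa using this
    refine ⟨hall, ?_⟩
    by_contra h2
    have hones : ∀ i : Fin l.length, l.get i = 1 := by
      intro i
      have hd := hall _ (l.get_mem i)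
      rcases (Nat.dvd_prime Nat.prime_two).mp hd with h | h
      · exact h
      · exact absurd (h ▸ l.get_mem i) h2
    have : ∀ i : Fin l.length, Subsingleton (ZMod (l.get i)) := by
      intro i; rw [hones i]; infer_instance
    have hs : Subsingleton (∀ i : Fin l.length, ZMod (l.get i)) :=
      @Pi.instSubsingleton _ _ this
    exact not_subsingleton_iff_nontrivial.mpr hnt hs
  · rintro ⟨hall, h2⟩
    obtain ⟨i, hi⟩ := List.mem_iff_get.mp h2
    have hnt2 : Nontrivial (ZMod (l.get i)) := by rw [hi]; infer_instance
    obtain ⟨a, b, hab⟩ := hnt2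
    constructor
    · refine ⟨Pi.single i a, Pi.single i b, fun h => hab ?_⟩
      have := congrFun h i
      simpa using this
    · intro x
      funext j
      have := (zmod_add_self_iff (l.get j)).mpr (hall _ (l.get_mem j))
      simpa using this (x j)

def consEquiv (a : ℕ) (t : List ℕ) :
    (∀ i : Fin (a::t : List ℕ).length, ZMod ((a::t : List ℕ).get i)) ≃+
      ZMod a × (∀ i : Fin t.length, ZMod (t.get i)) where
  toFun f := (f ⟨0, Nat.succ_pos _⟩, fun i => f i.succ)
  invFun x := Fin.cons x.1 x.2
  left_inv f := by
    funext i
    refine Fin.cases ?_ ?_ i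
    · rfl
    · intro j; rfl
  right_inv x := rfl
  map_add' f g := rfl

lemma list_equiv_of_eq {l1 l2 : List ℕ} (h : l1 = l2) :
    Nonempty ((∀ i : Fin l1.length, ZMod (l1.get i)) ≃+
      (∀ i : Fin l2.length, ZMod (l2.get i))) := by
  subst h; exact ⟨AddEquiv.refl _⟩

lemma filter_equiv (l : List ℕ) :
    Nonempty ((∀ i : Fin l.length, ZMod (l.get i)) ≃+
      (∀ i : Fin (l.filter fun n => n ≠ 1).length,
        ZMod ((l.filter fun n => n ≠ 1).get i))) := by
  induction l with
  | nil => exact ⟨AddEquiv.refl _⟩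
  | cons a t ih =>
    obtain ⟨e⟩ := ih
    by_cases ha : a = 1
    · subst ha
      rw [show (1::t : List ℕ).filter (fun n => n ≠ 1) = t.filter (fun n => n ≠ 1) by
        simp [List.filter_cons]]
      exact ⟨(consEquiv 1 t).trans (AddEquiv.uniqueProd.trans e)⟩
    · rw [show (a::t : List ℕ).filter (fun n => n ≠ 1)
          = a :: t.filter (fun n => n ≠ 1) by simp [List.filter_cons, ha]]
      exact ⟨((consEquiv a t).trans
        ((AddEquiv.refl (ZMod a)).prodCongr e)).trans
        (consEquiv a (t.filter fun n => n ≠ 1)).symm⟩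

theorem stmt_17 (p α k : ℕ) (hp : p.Prime) (hodd : Odd p) (hp3 : p ≠ 3)
    (hα : 1 ≤ α) (hk : 1 ≤ k) :
    ((Nontrivial (Uk k (p ^ α)) ∧ ∀ x : Uk k (p ^ α), x + x = 0) ↔
      (α < k ∧ Nontrivial (Uk (k - α + 1) p) ∧ ∀ x : Uk (k - α + 1) p, x + x = 0)) ∧
    ((Nontrivial (Uk k (p ^ α)) ∧ ∀ x : Uk k (p ^ α), x + x = 0) →
      Nonempty (Uk k (p ^ α) ≃+ Uk (k - α + 1) p)) := by
  have hp2 : p ≠ 2 := by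
    rintro rfl
    rw [Nat.odd_iff] at hodd
    omega
  have hp5 : 5 ≤ p := by
    have h2 := hp.two_le
    have hodd' := Nat.odd_iff.mp hodd
    omega
  have hL : UkList k (p ^ α) = Hl p (k-1) (α-1) := UkList_pp hp hp2 hk hα
  by_cases hαk : α < k
  · -- main case
    have hM : UkList (k - α + 1) p = Hl p (k - α) 0 := UkList_p hp hp2
    have hsub : k - 1 - (α - 1) = k - α := by omega
    obtain ⟨key1, key2⟩ := Bl_key hp hp2 (α - 1) (k - 1) (by omega)
    rw [hsub] at key1 key2
    have hiff : Bl (UkList k (p ^ α)) ↔ Bl (UkList (k - α + 1) p) := by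
      rw [hL, hM]; exact key1
    constructor
    · constructor
      · intro h
        have hBl := (bridge _).mp h
        obtain ⟨h1, h2⟩ := (bridge _).mpr (hiff.mp hBl)
        exact ⟨hαk, h1, h2⟩
      · rintro ⟨_, hnt, hx⟩
        exact (bridge _).mpr (hiff.mpr ((bridge _).mp ⟨hnt, hx⟩))
    · intro h
      have hBl := (bridge _).mp h
      have hfeq : (UkList k (p ^ α)).filter (fun n => n ≠ 1)
          = (UkList (k - α + 1) p).filter (fun n => n ≠ 1) := by
        rw [hL, hM]
        exact key2 (hL ▸ hBl)
      obtain ⟨e1⟩ := filter_equiv (UkList k (p ^ α))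
      obtain ⟨e2⟩ := filter_equiv (UkList (k - α + 1) p)
      obtain ⟨e3⟩ := list_equiv_of_eq hfeq
      exact ⟨(e1.trans e3).trans e2.symm⟩
  · -- α ≥ k : not boolean
    have hmem : p - 1 ∈ UkList k (p ^ α) := by
      rw [hL]
      exact mem_Hl_of_le hp hp2 (k-1) (α-1) (by omega)
    have hnotBl : ¬ Bl (UkList k (p ^ α)) := by
      rintro ⟨hall, -⟩
      have := Nat.le_of_dvd (by norm_num) (hall _ hmem)
      omega
    constructor
    · constructor
      · intro h
        exact absurd ((bridge _).mp h) hnotBl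
      · rintro ⟨h, -⟩
        exact absurd h hαk
    · intro h
      exact absurd ((bridge _).mp h) hnotBl
end
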